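/- arXiv:1908.11639 — 4 statements merged into one kernel-verified Lean document; each statement's English description precedes it below -/
import Mathlib

section
/- For all natural numbers m ≥ 1 and k ≥ 0, Γ((3k+m)/4) ≤ 8^{m/4} · (6k/7)^{3k/4} · e^{−3k/4} · Γ(m/4), where Γ is the Gamma function (with the convention that (6k/7)^{3k/4}=1 when k=0). -/
open Real Set MeasureTheory

/-- The function `x ^ a * exp (-(7*x/8))` attains its maximum at `x = 8*a/7`. -/
lemma key_max_bound {a x : ℝ} (ha : 0 < a) (hx : 0 < x) :
    x ^ a * Real.exp (-(7 * x / 8)) ≤ (8 * a / 7) ^ a * Real.exp (-a) := by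
  rw [rpow_def_of_pos hx, rpow_def_of_pos (by positivity), ← Real.exp_add, ← Real.exp_add]
  apply Real.exp_le_exp.mpr
  have h : Real.log (x / (8 * a / 7)) ≤ x / (8 * a / 7) - 1 :=
    Real.log_le_sub_one_of_pos (by positivity)
  rw [Real.log_div hx.ne' (by positivity)] at h
  have h2 := mul_le_mul_of_nonneg_left h ha.le
  have e2 : a * (x / (8 * a / 7) - 1) = 7 * x / 8 - a := by
    field_simp
  rw [e2] at h2
  nlinarith

lemma gamma_aux {a s : ℝ} (ha : 0 < a) (hs : 0 < s) :
    Real.Gamma (a + s) ≤ (8 : ℝ) ^ s * (8 * a / 7) ^ a * Real.exp (-a) * Real.Gamma s := by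
  have h1 : Real.Gamma (a + s) = ∫ x in Ioi (0 : ℝ), Real.exp (-x) * x ^ ((a + s) - 1) :=
    Real.Gamma_eq_integral (by linarith)
  have h2 : ∫ x in Ioi (0 : ℝ), x ^ (s - 1) * Real.exp (-((1 / 8 : ℝ) * x))
      = (1 / (1 / 8 : ℝ)) ^ s * Real.Gamma s :=
    Real.integral_rpow_mul_exp_neg_mul_Ioi hs (by norm_num)
  have hint : IntegrableOn
      (fun x : ℝ => ((8 * a / 7) ^ a * Real.exp (-a)) * (x ^ (s - 1) * Real.exp (-((1 / 8 : ℝ) * x))))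
      (Ioi 0) := by
    apply Integrable.const_mul
    have := integrableOn_rpow_mul_exp_neg_mul_rpow (p := 1) (s := s - 1) (b := 1 / 8)
      (by linarith) one_pos (by norm_num)
    refine this.congr_fun (fun x hx => ?_) measurableSet_Ioi
    simp only [Real.rpow_one, neg_mul]
  have hbound : Real.Gamma (a + s)
      ≤ ∫ x in Ioi (0 : ℝ),
          ((8 * a / 7) ^ a * Real.exp (-a)) * (x ^ (s - 1) * Real.exp (-((1 / 8 : ℝ) * x))) := by
    rw [h1]
    apply integral_mono_of_nonneg
    · filter_upwards [self_mem_ae_restrict measurableSet_Ioi] with x hx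
      have hx' : (0 : ℝ) < x := hx
      positivity
    · exact hint
    · filter_upwards [self_mem_ae_restrict measurableSet_Ioi] with x hx
      have hx' : (0 : ℝ) < x := hx
      have key := key_max_bound ha hx'
      have hexp : Real.exp (-x) = Real.exp (-(7 * x / 8)) * Real.exp (-((1 / 8 : ℝ) * x)) := by
        rw [← Real.exp_add]; congr 1; ring
      have e : Real.exp (-x) * x ^ ((a + s) - 1)
          = (x ^ a * Real.exp (-(7 * x / 8))) * (x ^ (s - 1) * Real.exp (-((1 / 8 : ℝ) * x))) := by
        rw [show (a + s) - 1 = a + (s - 1) by ring, Real.rpow_add hx', hexp]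
        ring
      rw [e]
      exact mul_le_mul_of_nonneg_right key (by positivity)
  rw [integral_const_mul, h2] at hbound
  have h8 : (1 / (1 / 8 : ℝ)) ^ s = (8 : ℝ) ^ s := by norm_num
  rw [h8] at hbound
  calc Real.Gamma (a + s) ≤ (8 * a / 7) ^ a * Real.exp (-a) * ((8 : ℝ) ^ s * Real.Gamma s) :=
        hbound
    _ = (8 : ℝ) ^ s * (8 * a / 7) ^ a * Real.exp (-a) * Real.Gamma s := by ring

/-- For natural numbers `m ≥ 1` and `k ≥ 0`,
`Γ((3k+m)/4) ≤ 8^{m/4} (6k/7)^{3k/4} e^{-3k/4} Γ(m/4)`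
(with the convention `(6·0/7)^0 = 1`, which holds for `rpow`). -/
theorem gamma_shift_bound (m k : ℕ) (hm : 1 ≤ m) :
    Real.Gamma ((3 * k + m : ℝ) / 4) ≤
      (8 : ℝ) ^ ((m : ℝ) / 4) * (6 * (k : ℝ) / 7) ^ ((3 * (k : ℝ)) / 4) *
        Real.exp (-(3 * (k : ℝ)) / 4) * Real.Gamma ((m : ℝ) / 4) := by
  have hm' : (0 : ℝ) < (m : ℝ) / 4 := by
    have : (1 : ℝ) ≤ (m : ℝ) := by exact_mod_cast hm
    linarith
  rcases Nat.eq_zero_or_pos k with rfl | hk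
  · simp only [Nat.cast_zero, mul_zero, zero_mul, zero_add, zero_div, Real.rpow_zero,
      mul_one, neg_zero, Real.exp_zero]
    have h1 : (1 : ℝ) ≤ (8 : ℝ) ^ ((m : ℝ) / 4) :=
      Real.one_le_rpow (by norm_num) (by positivity)
    nlinarith [Real.Gamma_pos_of_pos hm']
  · have ha : (0:ℝ) < 3 * (k : ℝ) / 4 := by
      have : (1 : ℝ) ≤ (k : ℝ) := by exact_mod_cast hk
      linarith
    have h := gamma_aux ha hm'
    rw [show (3 * (k:ℝ) + (m:ℝ)) / 4 = 3 * (k:ℝ) / 4 + (m:ℝ) / 4 by ring] at *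
    rw [show (6 * (k:ℝ) / 7) = 8 * (3 * (k:ℝ) / 4) / 7 by ring,
      show -(3 * (k:ℝ)) / 4 = -(3 * (k:ℝ) / 4) by ring]
    exact h
end

section
/- Let n ≥ 1, α > 0, γ ∈ ℝ, and let f : ℝ → ℝ be a measurable function with x ↦ f(x)/(1+x²)^α integrable on ℝ. Set 𝔡(θ) := cos^{2n−2}θ · (cos²θ + 2 sin²θ) and A(θ) := cos⁴θ + (cos²θ · γ + sin θ)². Then ∫_{−π/2}^{π/2} 𝔡(θ) · cos^{4α−2n−1}θ · f(sin θ / cos²θ) / A(θ)^α dθ = ∫_{−∞}^{∞} f(x) / (1 + (x+γ)²)^α dx. -/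
open Real MeasureTheory Set Filter Topology

/-- Change of variable `x = sin θ / cos²θ`: for `n ≥ 1`, `α > 0`, `γ ∈ ℝ`, and `f`
measurable with `f(x)/(1+x²)^α` integrable,
`∫_{-π/2}^{π/2} 𝔡(θ) cos^{4α-2n-1}θ f(sinθ/cos²θ)/A(θ)^α dθ = ∫ f(x)/(1+(x+γ)²)^α dx`,
where `𝔡(θ) = cos^{2n-2}θ (cos²θ + 2sin²θ)` and `A(θ) = cos⁴θ + (cos²θ·γ + sinθ)²`. -/
theorem integral_change_of_variable_tan_like (n : ℕ) (hn : 1 ≤ n) (α γ : ℝ) (hα : 0 < α)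
    (f : ℝ → ℝ) (hf : Measurable f)
    (hint : Integrable (fun x : ℝ => f x / (1 + x ^ 2) ^ α)) :
    ∫ θ in (-(π/2))..(π/2),
      (Real.cos θ ^ (2*n-2) * (Real.cos θ ^ 2 + 2 * Real.sin θ ^ 2)) *
        (Real.cos θ ^ (4*α - 2*(n:ℝ) - 1) * f (Real.sin θ / Real.cos θ ^ 2)) /
          (Real.cos θ ^ 4 + (Real.cos θ ^ 2 * γ + Real.sin θ) ^ 2) ^ α =
    ∫ x : ℝ, f x / (1 + (x + γ) ^ 2) ^ α := by
  have hπ : (0:ℝ) < π/2 := by positivity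
  set I : Set ℝ := Ioo (-(π/2)) (π/2) with hI
  set φ : ℝ → ℝ := fun θ => Real.sin θ / Real.cos θ ^ 2 with hφ
  set D : ℝ → ℝ := fun θ => (Real.cos θ ^ 2 + 2 * Real.sin θ ^ 2) / Real.cos θ ^ 3 with hDdef
  set g : ℝ → ℝ := fun x => f x / (1 + (x + γ) ^ 2) ^ α with hg
  have hcos : ∀ θ ∈ I, 0 < Real.cos θ := fun θ hθ => Real.cos_pos_of_mem_Ioo hθ
  have hderiv : ∀ θ ∈ I, HasDerivAt φ (D θ) θ := by
    intro θ hθ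
    have hc := hcos θ hθ
    have h2 : HasDerivAt (fun θ => Real.cos θ ^ 2)
        ((2:ℕ) * Real.cos θ ^ (2-1) * (-Real.sin θ)) θ := (Real.hasDerivAt_cos θ).pow 2
    have h := (Real.hasDerivAt_sin θ).div h2 (by positivity)
    refine h.congr_deriv ?_
    have h1 : Real.sin θ ^ 2 = 1 - Real.cos θ ^ 2 := by
      have := Real.sin_sq_add_cos_sq θ; linarith
    simp only [hDdef]
    field_simp [hDdef]
    ring
  have hDpos : ∀ θ ∈ I, 0 < D θ := by
    intro θ hθ
    have hc := hcos θ hθ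
    have : 0 < Real.cos θ ^ 2 + 2 * Real.sin θ ^ 2 := by positivity
    exact div_pos this (by positivity)
  have hcont : ContinuousOn φ I := by
    intro θ hθ
    exact ((hderiv θ hθ).continuousAt).continuousWithinAt
  have hmono : StrictMonoOn φ I := by
    apply strictMonoOn_of_deriv_pos (convex_Ioo _ _) hcont
    intro x hx
    rw [interior_Ioo] at hx
    rw [(hderiv x hx).deriv]
    exact hDpos x hx
  -- surjectivity: φ '' I = univ
  have hevT : ∀ᶠ θ in 𝓝[<] (π/2), θ ∈ I :=
    Ioo_mem_nhdsLT_of_mem (Set.mem_Ioc.mpr ⟨by linarith, le_refl _⟩)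
  have hevB : ∀ᶠ θ in 𝓝[>] (-(π/2)), θ ∈ I :=
    Ioo_mem_nhdsGT_of_mem (Set.mem_Ico.mpr ⟨le_refl _, by linarith⟩)
  have htop : Tendsto φ (𝓝[<] (π/2)) atTop := by
    have hsin : Tendsto Real.sin (𝓝[<] (π/2)) (𝓝 1) := by
      have := (Real.continuous_sin.tendsto (π/2)).mono_left
        (nhdsWithin_le_nhds (s := Iio (π/2)))
      simpa using this
    have hcos2 : Tendsto (fun θ => Real.cos θ ^ 2) (𝓝[<] (π/2)) (𝓝[>] 0) := by
      apply tendsto_nhdsWithin_of_tendsto_nhds_of_eventually_within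
      · have := ((Real.continuous_cos.pow 2).tendsto (π/2)).mono_left
          (nhdsWithin_le_nhds (s := Iio (π/2)))
        simpa [Pi.pow_def] using this
      · filter_upwards [hevT] with θ hθ
        have hc := hcos θ hθ
        exact Set.mem_Ioi.mpr (by positivity)
    have := hsin.pos_mul_atTop one_pos hcos2.inv_tendsto_nhdsGT_zero
    exact this.congr fun θ => by simp [hφ, div_eq_mul_inv]
  have hbot : Tendsto φ (𝓝[>] (-(π/2))) atBot := by
    have hsin : Tendsto Real.sin (𝓝[>] (-(π/2))) (𝓝 (-1)) := by
      have := (Real.continuous_sin.tendsto (-(π/2))).mono_left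
        (nhdsWithin_le_nhds (s := Ioi (-(π/2))))
      simpa using this
    have hcos2 : Tendsto (fun θ => Real.cos θ ^ 2) (𝓝[>] (-(π/2))) (𝓝[>] 0) := by
      apply tendsto_nhdsWithin_of_tendsto_nhds_of_eventually_within
      · have := ((Real.continuous_cos.pow 2).tendsto (-(π/2))).mono_left
          (nhdsWithin_le_nhds (s := Ioi (-(π/2))))
        simpa [Pi.pow_def] using this
      · filter_upwards [hevB] with θ hθ
        have hc := hcos θ hθ
        exact Set.mem_Ioi.mpr (by positivity)
    have := hsin.neg_mul_atTop (by norm_num) hcos2.inv_tendsto_nhdsGT_zero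
    exact this.congr fun θ => by simp [hφ, div_eq_mul_inv]
  have himg : φ '' I = univ := by
    apply eq_univ_of_forall
    intro y
    obtain ⟨b, hby, hbI⟩ : ∃ b, y < φ b ∧ b ∈ I := by
      have h1 : ∀ᶠ θ in 𝓝[<] (π/2), y < φ θ := htop.eventually (eventually_gt_atTop y)
      exact (h1.and hevT).exists
    obtain ⟨a, hay, haI⟩ : ∃ a, φ a < y ∧ a ∈ I := by
      have h1 : ∀ᶠ θ in 𝓝[>] (-(π/2)), φ θ < y := hbot.eventually (eventually_lt_atBot y)
      exact (h1.and hevB).exists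
    have hab : a < b := by
      by_contra h
      push_neg at h
      rcases eq_or_lt_of_le h with rfl | h
      · linarith
      · have := hmono hbI haI h; linarith
    have hsub : Icc a b ⊆ I := Icc_subset_Ioo haI.1 hbI.2
    have := intermediate_value_Icc hab.le (hcont.mono hsub)
    have hy : y ∈ Icc (φ a) (φ b) := ⟨hay.le, hby.le⟩
    exact image_mono hsub (this hy)
  -- main substitution
  have hkey : ∫ x in φ '' I, g x = ∫ θ in I, |D θ| • g (φ θ) :=
    integral_image_eq_integral_abs_deriv_smul measurableSet_Ioo
      (fun θ hθ => (hderiv θ hθ).hasDerivWithinAt) (hmono.injOn) g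
  rw [himg] at hkey
  rw [show (∫ x : ℝ, f x / (1 + (x + γ) ^ 2) ^ α) = ∫ x in (univ : Set ℝ), g x by
    rw [setIntegral_univ], hkey]
  rw [intervalIntegral.integral_of_le (by linarith), integral_Ioc_eq_integral_Ioo]
  apply setIntegral_congr_fun measurableSet_Ioo
  intro θ hθ
  dsimp only
  have hc := hcos θ hθ
  set c := Real.cos θ
  set s := Real.sin θ
  have hX : (0:ℝ) < 1 + (φ θ + γ)^2 := by positivity
  have hA : c ^ 4 + (c ^ 2 * γ + s) ^ 2 = c ^ 4 * (1 + (φ θ + γ) ^ 2) := by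
    rw [hφ]
    have hc0 : Real.cos θ ≠ 0 := hc.ne'
    field_simp
    ring
  have hApow : (c ^ 4 + (c ^ 2 * γ + s) ^ 2) ^ α
      = c ^ (4 * α) * (1 + (φ θ + γ) ^ 2) ^ α := by
    rw [hA, Real.mul_rpow (by positivity) (by positivity), ← Real.rpow_natCast c 4,
      ← Real.rpow_mul hc.le]
    norm_num
  have hexp : c ^ (2*n-2) * c ^ (4*α - 2*(n:ℝ) - 1) = c ^ (4*α - 3) := by
    rw [← Real.rpow_natCast c (2*n-2), ← Real.rpow_add hc]
    congr 1
    have : ((2*n-2 : ℕ) : ℝ) = 2*(n:ℝ) - 2 := by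
      have h2 : 2 ≤ 2*n := by omega
      push_cast [Nat.cast_sub h2]
      ring
    rw [this]; ring
  have hXpow : (0:ℝ) < (1 + (φ θ + γ)^2) ^ α := Real.rpow_pos_of_pos hX α
  have hcp : (0:ℝ) < c ^ (4*α) := Real.rpow_pos_of_pos hc (4*α)
  rw [smul_eq_mul, abs_of_pos (hDpos θ hθ), hApow]
  rw [hg, hDdef]
  have : c ^ (2*n-2) * (c ^ 2 + 2 * s ^ 2) * (c ^ (4*α - 2*(n:ℝ) - 1) * f (φ θ))
      = (c ^ 2 + 2 * s ^ 2) * (c ^ (2*n-2) * c ^ (4*α - 2*(n:ℝ) - 1)) * f (φ θ) := by ring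
  rw [hφ] at this ⊢
  rw [this, hexp]
  have hsplit : c ^ (4*α - 3) = c ^ (4*α) / c ^ (3:ℝ) := by
    rw [← Real.rpow_sub hc]
  have h3 : c ^ (3:ℝ) = c ^ (3:ℕ) := by
    rw [show ((3:ℝ)) = ((3:ℕ):ℝ) by norm_num, Real.rpow_natCast]
  rw [hsplit, h3]
  have hc3 : (0:ℝ) < c ^ (3:ℕ) := by positivity
  have hc0 : Real.cos θ ≠ 0 := hc.ne'
  field_simp
  ring
end

section
/- Let A be a symmetric 2n×2n real matrix and B an invertible antisymmetric 2n×2n real matrix. Then the kernel of A − B has dimension at most n. -/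
open Matrix Module

/-- If `A` is a symmetric `2n×2n` real matrix and `B` an invertible antisymmetric one,
then the kernel of `A - B` has dimension at most `n`. -/
theorem ker_symm_sub_antisymm_dim_le (n : ℕ) (A B : Matrix (Fin (2*n)) (Fin (2*n)) ℝ)
    (hA : A.IsSymm) (hB : Bᵀ = -B) (hBinv : IsUnit B) :
    Module.finrank ℝ (LinearMap.ker (Matrix.toLin' (A - B))) ≤ n := by
  classical
  set K := LinearMap.ker (Matrix.toLin' (A - B)) with hK
  have key : ∀ v w : Fin (2*n) → ℝ, v ∈ K → w ∈ K → v ⬝ᵥ B.mulVec w = 0 := by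
    intro v w hv hw
    rw [hK, LinearMap.mem_ker, Matrix.toLin'_apply, Matrix.sub_mulVec, sub_eq_zero] at hv hw
    have h1 : v ⬝ᵥ B.mulVec w = A.mulVec v ⬝ᵥ w := by
      rw [← hw, Matrix.dotProduct_mulVec, ← Matrix.mulVec_transpose, hA.eq]
    have h2 : A.mulVec v ⬝ᵥ w = -(v ⬝ᵥ B.mulVec w) := by
      rw [hv, dotProduct_comm, Matrix.dotProduct_mulVec, ← Matrix.mulVec_transpose, hB,
        Matrix.neg_mulVec, neg_dotProduct, dotProduct_comm]
    have := h1.trans h2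
    linarith
  -- move to EuclideanSpace
  let e : (Fin (2*n) → ℝ) ≃ₗ[ℝ] EuclideanSpace ℝ (Fin (2*n)) :=
    (WithLp.linearEquiv 2 ℝ (Fin (2*n) → ℝ)).symm
  let f : (Fin (2*n) → ℝ) →ₗ[ℝ] EuclideanSpace ℝ (Fin (2*n)) :=
    e.toLinearMap ∘ₗ Matrix.toLin' B
  have hf : Function.Injective f := by
    have hB' : Function.Injective (B.mulVec) := Matrix.mulVec_injective_iff_isUnit.2 hBinv
    intro x y hxy
    apply hB'
    have := e.injective (by simpa [f] using hxy)
    simpa [Matrix.toLin'_apply] using this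
  let K' := Submodule.map e.toLinearMap K
  let L := Submodule.map f K
  have hle : L ≤ K'ᗮ := by
    rintro y ⟨w, hw, rfl⟩
    rw [Submodule.mem_orthogonal]
    rintro u ⟨v, hv, rfl⟩
    have : inner ℝ (e.toLinearMap v) (f w) = v ⬝ᵥ B.mulVec w := by
      simp [f, e, PiLp.inner_apply, RCLike.inner_apply, dotProduct,
        Matrix.toLin'_apply, WithLp.linearEquiv, mul_comm]
    rw [show inner ℝ (e.toLinearMap v) (f w) = inner ℝ ((e : (Fin (2*n) → ℝ) →ₗ[ℝ] EuclideanSpace ℝ (Fin (2*n))) v) (f w) from rfl] at this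
    rw [this]
    exact key v w hv hw
  have hKK' : finrank ℝ K' = finrank ℝ K := LinearEquiv.finrank_map_eq e K
  have hLK : finrank ℝ L = finrank ℝ K := (K.equivMapOfInjective f hf).finrank_eq.symm
  have h1 : finrank ℝ L ≤ finrank ℝ K'ᗮ := Submodule.finrank_mono hle
  have h2 : finrank ℝ K' + finrank ℝ K'ᗮ = finrank ℝ (EuclideanSpace ℝ (Fin (2*n))) :=
    Submodule.finrank_add_finrank_orthogonal K'
  have h3 : finrank ℝ (EuclideanSpace ℝ (Fin (2*n))) = 2*n := finrank_euclideanSpace_fin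
  omega
end

section
/- The natural number solutions (k₁, k₂) ∈ ℕ × ℕ of the equation k₁²(8k₂ − 9) + k₁(8k₂² − 42k₂ + 36) + (−9k₂² + 36k₂ − 27) = 0 are exactly: the pairs with k₁ + k₂ = 3, together with (k₁,k₂) = (1,0) and (k₁,k₂) = (0,1). -/
/-- The natural number solutions of
`k₁²(8k₂-9) + k₁(8k₂²-42k₂+36) + (-9k₂²+36k₂-27) = 0` are exactly the pairs with
`k₁ + k₂ = 3`, together with `(1,0)` and `(0,1)`. -/
theorem nat_solutions_quadratic (k₁ k₂ : ℕ) :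
    ((k₁ : ℤ) ^ 2 * (8 * (k₂ : ℤ) - 9) + (k₁ : ℤ) * (8 * (k₂ : ℤ) ^ 2 - 42 * (k₂ : ℤ) + 36)
        + (-9 * (k₂ : ℤ) ^ 2 + 36 * (k₂ : ℤ) - 27) = 0)
    ↔ (k₁ + k₂ = 3 ∨ (k₁ = 1 ∧ k₂ = 0) ∨ (k₁ = 0 ∧ k₂ = 1)) := by
  constructor
  · intro h
    have key : ((k₁ : ℤ) + (k₂ : ℤ) - 3) *
        ((8 * (k₂ : ℤ) - 9) * (k₁ : ℤ) - 9 * (k₂ : ℤ) + 9) = 0 := by linear_combination h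
    rcases mul_eq_zero.mp key with h1 | h2
    · left; omega
    · have h9 : (8 * (k₁ : ℤ) - 9) * (8 * (k₂ : ℤ) - 9) = 9 := by linear_combination 8 * h2
      have hb1 : k₁ ≤ 2 := by
        by_contra hc
        have : (3 : ℤ) ≤ (k₁ : ℤ) := by exact_mod_cast by omega
        rcases lt_trichotomy ((8:ℤ) * (k₂ : ℤ) - 9) 0 with hl | hl | hl
        · nlinarith
        · omega
        · nlinarith
      have hb2 : k₂ ≤ 2 := by
        by_contra hc
        have : (3 : ℤ) ≤ (k₂ : ℤ) := by exact_mod_cast by omega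
        rcases lt_trichotomy ((8:ℤ) * (k₁ : ℤ) - 9) 0 with hl | hl | hl
        · nlinarith
        · omega
        · nlinarith
      interval_cases k₁ <;> interval_cases k₂ <;> (revert h9; norm_num)
  · rintro (hc | ⟨h1, h2⟩ | ⟨h1, h2⟩)
    · have hz : (k₁ : ℤ) + (k₂ : ℤ) = 3 := by exact_mod_cast hc
      linear_combination ((8 * (k₂ : ℤ) - 9) * (k₁ : ℤ) - 9 * (k₂ : ℤ) + 9) * hz
    · subst h1; subst h2; norm_num
    · subst h1; subst h2; norm_num
end
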